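/- Let S be a reduced commutative local ring, M₀ a finite free S-module, and I₀ : End_S(M₀) → End_S(M₀) an S-linear anti-automorphism with I₀ ∘ I₀ = id. If b₀ and b₀′ are two perfect bilinear forms on M₀ each satisfying b(x(u), v) = b(u, I₀(x)(v)) for every x ∈ End_S(M₀) and all u, v ∈ M₀, then there exists a unit s ∈ S× such that b₀′(u,v) = s · b₀(u,v) for all u, v ∈ M₀. -/

import Mathlib

/-- Lemma 3.3.1 (b): a perfect bilinear form defining a given involution of the first kind
on the endomorphism algebra of a finite free module over a reduced commutative local ring
is unique up to multiplication by a unit. -/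
theorem stmt_2 (S : Type*) [CommRing S] [IsLocalRing S] [IsReduced S]
    (M₀ : Type*) [AddCommGroup M₀] [Module S M₀] [Module.Free S M₀] [Module.Finite S M₀]
    (I₀ : Module.End S M₀ →ₗ[S] Module.End S M₀)
    (hbij : Function.Bijective ⇑I₀)
    (hanti : ∀ x y : Module.End S M₀, I₀ (x * y) = I₀ y * I₀ x)
    (hone : I₀ 1 = 1)
    (hinv : ∀ x : Module.End S M₀, I₀ (I₀ x) = x)
    (b₀ b₀' : LinearMap.BilinForm S M₀)
    (hperf : Function.Bijective ⇑b₀.flip)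
    (hperf' : Function.Bijective ⇑b₀'.flip)
    (hadj : ∀ (x : Module.End S M₀) (u v : M₀), b₀ (x u) v = b₀ u ((I₀ x) v))
    (hadj' : ∀ (x : Module.End S M₀) (u v : M₀), b₀' (x u) v = b₀' u ((I₀ x) v)) :
    ∃ s : Sˣ, ∀ u v : M₀, b₀' u v = (s : S) * b₀ u v := by
  classical
  set B := Module.Free.chooseBasis S M₀ with hB
  cases isEmpty_or_nonempty (Module.Free.ChooseBasisIndex S M₀) with
  | inl h =>
      have hsub : Subsingleton M₀ := B.repr.toEquiv.subsingleton
      refine ⟨1, fun u v => ?_⟩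
      have hu : u = 0 := Subsingleton.elim u 0
      simp [hu]
  | inr h =>
      obtain ⟨i₀⟩ := h
      -- the comparison automorphism g with b₀'(u,v) = b₀(u, g v)
      let e := LinearEquiv.ofBijective b₀.flip hperf
      let e' := LinearEquiv.ofBijective b₀'.flip hperf'
      let g : M₀ ≃ₗ[S] M₀ := e'.trans e.symm
      have hkey : ∀ u v : M₀, b₀' u v = b₀ u (g v) := by
        intro u v
        have : b₀.flip (g v) = b₀'.flip v := by
          show e (e.symm (e' v)) = b₀'.flip v
          simp [e']
        exact (DFunLike.congr_fun this u).symm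
      -- g commutes with every endomorphism
      have hcomm : ∀ (y : Module.End S M₀) (v : M₀), g (y v) = y (g v) := by
        intro y v
        obtain ⟨x, hx⟩ := hbij.2 y
        apply hperf.1
        ext u
        show b₀ u (g (y v)) = b₀ u (y (g v))
        rw [← hx]
        calc b₀ u (g (I₀ x v)) = b₀' u (I₀ x v) := (hkey _ _).symm
          _ = b₀' (x u) v := (hadj' x u v).symm
          _ = b₀ (x u) (g v) := hkey _ _
          _ = b₀ u (I₀ x (g v)) := hadj x u (g v)
      -- hence g is multiplication by a scalar s
      set s : S := B.coord i₀ (g (B i₀)) with hs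
      have hg : ∀ v : M₀, g v = s • v := by
        intro v
        have := hcomm (LinearMap.smulRight (B.coord i₀) v) (B i₀)
        simpa [LinearMap.smulRight_apply, Module.Basis.coord_apply, Module.Basis.repr_self, hs] using this
      -- s is a unit since g is surjective
      obtain ⟨w, hw⟩ := g.surjective (B i₀)
      have hsu : IsUnit s := by
        have : s * B.coord i₀ w = 1 := by
          have := congrArg (B.coord i₀) hw
          rw [hg] at this
          simpa [mul_comm] using this
        exact IsUnit.of_mul_eq_one _ this
      refine ⟨hsu.unit, fun u v => ?_⟩
      rw [hkey u v, hg v, map_smul]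
      simp [hsu.unit_spec, smul_eq_mul]
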